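/- Suppose $\phi^k_N$ satisfy the bilinear equations $a_0^{-2}q^{-k+1}\phi^{k-2}_{N+1}\phi^{k+1}_N+\phi^k_{N+1}\phi^{k-1}_N-q^{-N}\phi^{k-1}_{N+1}\phi^k_N=0$ and $q^N\phi^{k+1}_{N+1}\phi^{k-2}_N+a_0^{-2}q^{-k-N}\phi^{k-1}_{N+1}\phi^k_N-\phi^k_{N+1}\phi^{k-1}_N=0$ for all $k$, with all $\phi^k_N\neq 0$. Then $X_k=-a_0 q^{(k+2N)/2}\frac{\phi^k_{N+1}\phi^{k-1}_N}{\phi^{k-1}_{N+1}\phi^k_N}$ satisfies the $q$-P$_{II}$ equation $X_{k+1}=\frac{q^{2N+1}}{X_k X_{k-1}}\cdot\frac{1+a_0 q^{k/2}X_k}{a_0 q^{k/2}+X_k}$ (the case $c=1$). -/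

import Mathlib

theorem stmt10 (q q2 a0 : ℂ) (hq : q ≠ 0) (hq2 : q2 ^ 2 = q) (ha0 : a0 ≠ 0) (N : ℤ)
    (φ : ℤ → ℤ → ℂ) (hφ : ∀ k M : ℤ, φ k M ≠ 0)
    (hb1 : ∀ k : ℤ, a0 ^ (-2 : ℤ) * q ^ (-k + 1) * φ (k - 2) (N + 1) * φ (k + 1) N +
      φ k (N + 1) * φ (k - 1) N - q ^ (-N) * φ (k - 1) (N + 1) * φ k N = 0)
    (hb2 : ∀ k : ℤ, q ^ N * φ (k + 1) (N + 1) * φ (k - 2) N +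
      a0 ^ (-2 : ℤ) * q ^ (-k - N) * φ (k - 1) (N + 1) * φ k N -
      φ k (N + 1) * φ (k - 1) N = 0)
    (X : ℤ → ℂ)
    (hX : ∀ k : ℤ, X k = -(a0 * q2 ^ (k + 2 * N)) * (φ k (N + 1) * φ (k - 1) N) /
      (φ (k - 1) (N + 1) * φ k N))
    (hden : ∀ k : ℤ, a0 * q2 ^ k + X k ≠ 0) :
    ∀ k : ℤ, X (k + 1) = q ^ (2 * N + 1) / (X k * X (k - 1)) *
      ((1 + a0 * q2 ^ k * X k) / (a0 * q2 ^ k + X k)) := by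
  intro k
  have hq2' : q2 ≠ 0 := fun h => hq (by rw [← hq2, h]; ring)
  have hqN : q2 ^ (2 * N) = q ^ N := by rw [← hq2, zpow_mul]; norm_cast
  have hqk : q ^ k = (q2 ^ k) ^ 2 := by
    rw [← hq2, ← zpow_natCast (q2 ^ k) 2, ← zpow_mul, mul_comm, zpow_mul]; norm_cast
  have ht : q2 ^ k ≠ 0 := zpow_ne_zero _ hq2'
  have hQ : (q : ℂ) ^ N ≠ 0 := zpow_ne_zero _ hq
  -- abbreviations
  have H1 := hb1 k
  have H2 := hb2 k
  have hXk := hX k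
  have hXk1 := hX (k + 1)
  have hXkm := hX (k - 1)
  have hD := hden k
  rw [show k + 1 - 1 = k from by ring, show k + 1 + 2 * N = k + 2 * N + 1 from by ring] at hXk1
  rw [show k - 1 - 1 = k - 2 from by ring] at hXkm
  have e1 : q2 ^ (k + 2 * N) = q2 ^ k * q ^ N := by rw [zpow_add₀ hq2', hqN]
  have e2 : q2 ^ (k + 2 * N + 1) = q2 ^ k * q ^ N * q2 := by rw [zpow_add₀ hq2', e1]; norm_num
  have e3 : q2 ^ (k - 1 + 2 * N) = q2 ^ k * q ^ N / q2 := by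
    rw [show k - 1 + 2 * N = k + 2 * N + (-1) from by ring, zpow_add₀ hq2', e1, zpow_neg_one]
    ring
  have e4 : (q : ℂ) ^ (-k + 1) = q / (q2 ^ k) ^ 2 := by
    rw [zpow_add₀ hq, zpow_neg, hqk, zpow_one]; ring
  have e5 : (q : ℂ) ^ (-N) = (q ^ N)⁻¹ := by rw [zpow_neg]
  have e6 : (q : ℂ) ^ (-k - N) = ((q2 ^ k) ^ 2 * q ^ N)⁻¹ := by
    rw [show -k - N = -k + -N from by ring, zpow_add₀ hq, zpow_neg, zpow_neg, hqk]
    ring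
  have e7 : (q : ℂ) ^ (2 * N + 1) = (q ^ N) ^ 2 * q := by
    rw [zpow_add₀ hq, two_mul, zpow_add₀ hq, zpow_one]; ring
  have e8 : (a0 : ℂ) ^ (-2 : ℤ) = (a0 ^ 2)⁻¹ := by
    rw [zpow_neg]; norm_cast
  rw [e4, e5, e8] at H1
  rw [e6, e8] at H2
  rw [e2] at hXk1
  rw [e1] at hXk
  rw [e3] at hXkm
  rw [hXk] at hD
  rw [hXk1, hXk, hXkm, e7]
  set t := q2 ^ k
  set Q := (q : ℂ) ^ N
  set a := φ (k + 1) (N + 1)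
  set b := φ k (N + 1)
  set c := φ (k - 1) (N + 1)
  set d := φ (k - 2) (N + 1)
  set e := φ (k + 1) N
  set f := φ k N
  set g := φ (k - 1) N
  set h := φ (k - 2) N
  have ha := hφ (k + 1) (N + 1)
  have hbn := hφ k (N + 1)
  have hc := hφ (k - 1) (N + 1)
  have hd' := hφ (k - 2) (N + 1)
  have he := hφ (k + 1) N
  have hf := hφ k N
  have hg := hφ (k - 1) N
  have hh := hφ (k - 2) N
  field_simp at H1 H2 hD ⊢
  have hA : a0 * (t * Q) * (b * g) ≠ 0 :=
    mul_ne_zero (mul_ne_zero ha0 (mul_ne_zero ht hQ)) (mul_ne_zero hbn hg)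
  have hB : a0 * (t * Q) * (c * h) ≠ 0 :=
    mul_ne_zero (mul_ne_zero ha0 (mul_ne_zero ht hQ)) (mul_ne_zero hc hh)
  have hD2 : c * f - b * g * Q ≠ 0 := by
    intro h0; apply hD
    rw [show (1 : ℂ) + -(b * g * Q / (c * f)) = (c * f - b * g * Q) / (c * f) by rw [eq_div_iff (mul_ne_zero hc hf), add_mul, neg_mul, div_mul_cancel₀ _ (mul_ne_zero hc hf)]; ring, h0]
    simp
  have hE : (1 : ℂ) + -(b * g * Q / (c * f)) = (c * f - b * g * Q) / (c * f) := by
    rw [eq_div_iff (mul_ne_zero hc hf), add_mul, neg_mul, div_mul_cancel₀ _ (mul_ne_zero hc hf)]; ring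
  have hF : (1 : ℂ) + -(a0 ^ 2 * t ^ 2 * b * g * Q / (c * f)) = (c * f - a0 ^ 2 * t ^ 2 * b * g * Q) / (c * f) := by
    rw [eq_div_iff (mul_ne_zero hc hf), add_mul, neg_mul, div_mul_cancel₀ _ (mul_ne_zero hc hf)]; ring
  have hb0 : b ≠ 0 := hbn
  have hc0 : c ≠ 0 := hc
  have hf0 : f ≠ 0 := hf
  have hg0 : g ≠ 0 := hg
  have hh0 : h ≠ 0 := hh
  have he0 : e ≠ 0 := he
  have hS : b * g * c * h * ((c * f - b * g * Q) / (c * f)) ≠ 0 := by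
    simp [hb0, hg0, hc0, hh0, hD2, hf0]
  rw [hE, hF, ← neg_div, div_eq_div_iff (mul_ne_zero he hbn) hS]
  field_simp
  apply mul_left_cancel₀ hQ
  linear_combination (b * (a0 ^ 2 * t ^ 2 * Q * b * g - f * c)) * H1 +
    (b * a0 ^ 2 * t ^ 2 * (Q * b * g - f * c)) * H2
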